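/- Let Z ⊆ ℝ^d be a nonempty compact set, let Z* ⊆ Z be a nonempty closed subset, and let F : Z → Z be a continuous map such that (i) F(z) = z for every z ∈ Z*, and (ii) for every z ∈ Z \ Z*, min_{z* ∈ Z*} ½‖z* − F(z)‖₂² < min_{z* ∈ Z*} ½‖z* − z‖₂². Then for every initial point z¹ ∈ Z, the sequence defined by z^{n+1} = F(z^n) converges to the set Z*, i.e. inf_{z* ∈ Z*} ‖z^n − z*‖₂ → 0 as n → ∞. -/

import Mathlib

open Metric Filter

lemma sInf_eq_half_infDist_sq {E : Type*} [NormedAddCommGroup E]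
    (S : Set E) (hS : S.Nonempty) (hSc : IsCompact S) (z : E) :
    sInf ((fun zs => (1 / 2 : ℝ) * ‖zs - z‖ ^ 2) '' S) = (1 / 2) * (infDist z S) ^ 2 := by
  obtain ⟨w, hwS, hw⟩ := hSc.exists_infDist_eq_dist hS z
  have hbdd : ∀ y ∈ (fun zs => (1 / 2 : ℝ) * ‖zs - z‖ ^ 2) '' S,
      (1 / 2) * (infDist z S) ^ 2 ≤ y := by
    rintro y ⟨zs, hzs, rfl⟩
    have h1 : infDist z S ≤ ‖zs - z‖ := by
      rw [← dist_eq_norm]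
      simpa [dist_comm] using infDist_le_dist_of_mem (x := z) hzs
    have h0 : (0:ℝ) ≤ infDist z S := infDist_nonneg
    nlinarith
  apply le_antisymm
  · have : (1 / 2 : ℝ) * ‖w - z‖ ^ 2 ∈ (fun zs => (1 / 2 : ℝ) * ‖zs - z‖ ^ 2) '' S :=
      ⟨w, hwS, rfl⟩
    have hle := csInf_le ⟨_, fun y hy => hbdd y hy⟩ this
    have heq : ‖w - z‖ = infDist z S := by
      rw [hw, dist_eq_norm, norm_sub_rev]
    rw [heq] at hle
    exact hle
  · exact le_csInf ⟨_, ⟨w, hwS, rfl⟩⟩ hbdd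

set_option maxHeartbeats 1000000 in
/-- If `F : Z → Z` is continuous on a nonempty compact `Z ⊆ ℝ^d`,
fixes the nonempty closed subset `Z* ⊆ Z` pointwise, and strictly decreases the
minimal (Euclidean) Bregman divergence `½‖z* − ·‖₂²` to `Z*` off `Z*`, then every
iterate sequence `z^{n+1} = F(z^n)` converges to the set `Z*`. -/
theorem rt_fixed_point_iteration_converges_to_set
    (d : ℕ) (Z Zstar : Set (EuclideanSpace ℝ (Fin d)))
    (hZne : Z.Nonempty) (hZcomp : IsCompact Z)
    (hsub : Zstar ⊆ Z) (hZsne : Zstar.Nonempty) (hZscl : IsClosed Zstar)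
    (F : EuclideanSpace ℝ (Fin d) → EuclideanSpace ℝ (Fin d))
    (hmap : Set.MapsTo F Z Z) (hcont : ContinuousOn F Z)
    (hfix : ∀ z ∈ Zstar, F z = z)
    (hdec : ∀ z ∈ Z \ Zstar,
      sInf ((fun zs => (1 / 2) * ‖zs - F z‖ ^ 2) '' Zstar) <
      sInf ((fun zs => (1 / 2) * ‖zs - z‖ ^ 2) '' Zstar))
    (z1 : EuclideanSpace ℝ (Fin d)) (hz1 : z1 ∈ Z)
    (seq : ℕ → EuclideanSpace ℝ (Fin d))
    (hseq0 : seq 0 = z1)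
    (hseqrec : ∀ n, seq (n + 1) = F (seq n)) :
    Filter.Tendsto (fun n => Metric.infDist (seq n) Zstar) Filter.atTop (nhds 0) := by
  have hZscomp : IsCompact Zstar := hZcomp.of_isClosed_subset hZscl hsub
  set g : EuclideanSpace ℝ (Fin d) → ℝ := fun z => infDist z Zstar with hg
  -- strict decrease off Zstar
  have hkey : ∀ z ∈ Z \ Zstar, g (F z) < g z := by
    intro z hz
    have h := hdec z hz
    rw [sInf_eq_half_infDist_sq Zstar hZsne hZscomp, sInf_eq_half_infDist_sq Zstar hZsne hZscomp]
      at h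
    have h2 : g (F z) ^ 2 < g z ^ 2 := by dsimp [g]; linarith
    by_contra hcon
    push_neg at hcon
    have : g z ^ 2 ≤ g (F z) ^ 2 := pow_le_pow_left₀ infDist_nonneg hcon 2
    linarith
  have hle : ∀ z ∈ Z, g (F z) ≤ g z := by
    intro z hz
    by_cases hzs : z ∈ Zstar
    · rw [hfix z hzs]
    · exact (hkey z ⟨hz, hzs⟩).le
  -- sequence stays in Z
  have hmem : ∀ n, seq n ∈ Z := by
    intro n; induction n with
    | zero => rw [hseq0]; exact hz1
    | succ n ih => rw [hseqrec]; exact hmap ih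
  have hanti : Antitone (fun n => g (seq n)) := by
    apply antitone_nat_of_succ_le
    intro n
    rw [hseqrec]
    exact hle _ (hmem n)
  have hbdd : BddBelow (Set.range fun n => g (seq n)) :=
    ⟨0, by rintro y ⟨n, rfl⟩; exact infDist_nonneg⟩
  set L : ℝ := ⨅ n, g (seq n) with hL
  have htend : Tendsto (fun n => g (seq n)) atTop (nhds L) :=
    tendsto_atTop_ciInf hanti hbdd
  have hL0 : 0 ≤ L := le_ciInf fun n => infDist_nonneg
  -- suffices L = 0
  suffices hLz : L = 0 by rwa [hLz] at htend
  by_contra hLne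
  have hLpos : 0 < L := lt_of_le_of_ne hL0 (Ne.symm hLne)
  obtain ⟨w, hwZ, φ, hφ, hwt⟩ := hZcomp.tendsto_subseq hmem
  have hgcont : Continuous g := continuous_infDist_pt Zstar
  have hgw : g w = L :=
    tendsto_nhds_unique ((hgcont.tendsto w).comp hwt) (htend.comp hφ.tendsto_atTop)
  have hwne : w ∉ Zstar := by
    intro hw
    have h0 : g w = 0 := (hZscl.mem_iff_infDist_zero hZsne).mp hw
    linarith
  have hstrict : g (F w) < L := hgw ▸ hkey w ⟨hwZ, hwne⟩
  -- F (seq (φ k)) → F w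
  have hwt' : Tendsto (fun k => seq (φ k)) atTop (nhdsWithin w Z) := by
    rw [tendsto_nhdsWithin_iff]
    exact ⟨hwt, Filter.Eventually.of_forall fun k => hmem (φ k)⟩
  have hFt : Tendsto (fun k => F (seq (φ k))) atTop (nhds (F w)) :=
    (hcont w hwZ).tendsto.comp hwt'
  have h1 : Tendsto (fun k => g (seq (φ k + 1))) atTop (nhds (g (F w))) := by
    simp only [hseqrec]
    exact (hgcont.tendsto (F w)).comp hFt
  have h2 : Tendsto (fun k => g (seq (φ k + 1))) atTop (nhds L) := by
    apply htend.comp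
    exact StrictMono.tendsto_atTop fun a b h => Nat.succ_lt_succ (hφ h)
  have := tendsto_nhds_unique h1 h2
  linarith
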